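/- All tiles of a tile-substitution are uniformly close to one another: for all i, j ≤ m and all a ∈ A_i, b ∈ A_j, one has |a − b| ≤ e^{(k)}·‖Q^{−k}‖/(1 − ‖Q^{−k}‖) = R. -/

import Mathlib

open Pointwise Set

noncomputable section

/-- Iterated digit sets: `iterD Q D n i j` is `(Dⁿ)_{ij}`. -/
def iterD {E : Type*} [AddCommGroup E] {m : ℕ}
    (Q : E → E) (D : Fin m → Fin m → Set E) : ℕ → Fin m → Fin m → Set E
  | 0 => fun i j => if i = j then {0} else ∅
  | n + 1 => fun i j => ⋃ l : Fin m, D i l + Q '' iterD Q D n l j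

lemma iterD_finite {E : Type*} [AddCommGroup E] {m : ℕ}
    (Q : E → E) (D : Fin m → Fin m → Set E) (hD : ∀ i j, (D i j).Finite) :
    ∀ n i j, (iterD Q D n i j).Finite := by
  intro n
  induction n with
  | zero =>
    intro i j
    by_cases h : i = j <;> simp [iterD, h]
  | succ n ih =>
    intro i j
    simp only [iterD]
    exact Set.finite_iUnion fun l => (hD i l).add ((ih l j).image Q)

lemma iterD_decomp {E : Type*} [AddCommGroup E] {m : ℕ}
    (Q : E ≃+ E) (D : Fin m → Fin m → Set E) (A : Fin m → Set E)
    (htile : ∀ j, ⇑Q '' A j = ⋃ i, D i j + A i) :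
    ∀ n : ℕ, ∀ j : Fin m, ∀ b ∈ A j, ∃ i : Fin m, ∃ x ∈ iterD (⇑Q) D n i j,
      ∃ b' ∈ A i, (⇑Q)^[n] b = x + b' := by
  intro n
  induction n with
  | zero =>
    intro j b hb
    exact ⟨j, 0, by simp [iterD], b, hb, by simp⟩
  | succ n ih =>
    intro j b hb
    obtain ⟨l, x, hx, b', hb', hEq⟩ := ih j b hb
    have hmem : Q b' ∈ ⋃ i, D i l + A i := by
      rw [← htile l]; exact Set.mem_image_of_mem _ hb'
    obtain ⟨i, hi⟩ := Set.mem_iUnion.mp hmem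
    obtain ⟨x0, hx0, b'', hb'', hsum⟩ := Set.mem_add.mp hi
    refine ⟨i, x0 + Q x, ?_, b'', hb'', ?_⟩
    · exact Set.mem_iUnion.mpr ⟨l, Set.add_mem_add hx0 ⟨x, hx, rfl⟩⟩
    · rw [Function.iterate_succ_apply', hEq, map_add, ← hsum]
      abel

/-- all tiles are uniformly close to one another:
`|a − b| ≤ e^{(k)}·‖Q^{−k}‖/(1 − ‖Q^{−k}‖) = R` for all `a ∈ A_i`, `b ∈ A_j`. -/
theorem stmt_3 (d m k : ℕ) (hd : 1 ≤ d) (hm : 1 ≤ m) (hk : 1 ≤ k)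
    (Q : EuclideanSpace ℝ (Fin d) ≃L[ℝ] EuclideanSpace ℝ (Fin d))
    (hQk : ‖(Q.symm : EuclideanSpace ℝ (Fin d) →L[ℝ] EuclideanSpace ℝ (Fin d)) ^ k‖ < 1)
    (D : Fin m → Fin m → Set (EuclideanSpace ℝ (Fin d)))
    (hDfin : ∀ i j, (D i j).Finite)
    (e : ℝ)
    (he : e = sSup {t : ℝ | ∃ i j i' j' : Fin m,
      ∃ x ∈ iterD (⇑Q) D k i j, ∃ y ∈ iterD (⇑Q) D k i' j', t = ‖x - y‖})
    (R : ℝ)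
    (hR : R = e * ‖(Q.symm : EuclideanSpace ℝ (Fin d) →L[ℝ] EuclideanSpace ℝ (Fin d)) ^ k‖ /
      (1 - ‖(Q.symm : EuclideanSpace ℝ (Fin d) →L[ℝ] EuclideanSpace ℝ (Fin d)) ^ k‖))
    (A : Fin m → Set (EuclideanSpace ℝ (Fin d)))
    (hAne : ∀ i, (A i).Nonempty) (hAcp : ∀ i, IsCompact (A i))
    (htile : ∀ j, ⇑Q '' A j = ⋃ i, D i j + A i) :
    ∀ i j : Fin m, ∀ a ∈ A i, ∀ b ∈ A j, ‖a - b‖ ≤ R := by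
  set P := (Q.symm : EuclideanSpace ℝ (Fin d) →L[ℝ] EuclideanSpace ℝ (Fin d)) ^ k with hP
  set c := ‖P‖ with hc
  have hc0 : 0 ≤ c := norm_nonneg _
  have hc1 : c < 1 := hQk
  -- decomposition lemma applied at level k
  have hdec : ∀ j : Fin m, ∀ b ∈ A j, ∃ i : Fin m, ∃ x ∈ iterD (⇑Q) D k i j,
      ∃ b' ∈ A i, (⇑Q)^[k] b = x + b' := by
    have := iterD_decomp (m := m) (Q.toLinearEquiv.toAddEquiv) D A (by exact htile) k
    exact this
  -- P inverts the k-th iterate of Q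
  have hPinv : ∀ v : EuclideanSpace ℝ (Fin d), P ((⇑Q)^[k] v) = v := by
    intro v
    have h1 : ⇑P = (⇑(Q.symm : EuclideanSpace ℝ (Fin d) →L[ℝ] EuclideanSpace ℝ (Fin d)))^[k] :=
      ContinuousLinearMap.coe_pow' _ k
    have h2 : Function.LeftInverse (⇑Q.symm)^[k] (⇑Q)^[k] :=
      Function.LeftInverse.iterate (fun x => Q.symm_apply_apply x) k
    rw [h1]; exact h2 v
  -- the set of distances between tile points, and its sup S
  set T : Set ℝ := {t : ℝ | ∃ i j : Fin m, ∃ a ∈ A i, ∃ b ∈ A j, t = ‖a - b‖} with hT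
  have i0 : Fin m := ⟨0, hm⟩
  obtain ⟨a0, ha0⟩ := hAne i0
  have hTne : T.Nonempty := ⟨‖a0 - a0‖, i0, i0, a0, ha0, a0, ha0, rfl⟩
  obtain ⟨M, hM⟩ := isBounded_iff_forall_norm_le.mp (isCompact_iUnion hAcp).isBounded
  have hTbdd : BddAbove T := by
    refine ⟨2 * M, fun t ht => ?_⟩
    obtain ⟨i, j, a, ha, b, hb, rfl⟩ := ht
    have hMa := hM a (Set.mem_iUnion.mpr ⟨i, ha⟩)
    have hMb := hM b (Set.mem_iUnion.mpr ⟨j, hb⟩)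
    calc ‖a - b‖ ≤ ‖a‖ + ‖b‖ := norm_sub_le _ _
      _ ≤ 2 * M := by linarith
  set S := sSup T with hS
  have hTle : ∀ t ∈ T, t ≤ S := fun t ht => le_csSup hTbdd ht
  have hS0 : 0 ≤ S := by
    have := hTle ‖a0 - a0‖ ⟨i0, i0, a0, ha0, a0, ha0, rfl⟩
    simpa using this
  -- bound on elements of the e-set
  set Eset : Set ℝ := {t : ℝ | ∃ i j i' j' : Fin m,
      ∃ x ∈ iterD (⇑Q) D k i j, ∃ y ∈ iterD (⇑Q) D k i' j', t = ‖x - y‖} with hEset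
  have hEfin : Eset.Finite := by
    have hU : (⋃ i : Fin m, ⋃ j : Fin m, iterD (⇑Q) D k i j).Finite :=
      Set.finite_iUnion fun i => Set.finite_iUnion fun j => iterD_finite (⇑Q) D hDfin k i j
    refine (Set.Finite.image2 (fun x y => ‖x - y‖) hU hU).subset ?_
    rintro t ⟨i, j, i', j', x, hx, y, hy, rfl⟩
    exact Set.mem_image2_of_mem (Set.mem_iUnion.mpr ⟨i, Set.mem_iUnion.mpr ⟨j, hx⟩⟩)
      (Set.mem_iUnion.mpr ⟨i', Set.mem_iUnion.mpr ⟨j', hy⟩⟩)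
  have hEle : ∀ t ∈ Eset, t ≤ e := fun t ht => he ▸ le_csSup hEfin.bddAbove ht
  have he0 : 0 ≤ e := by
    obtain ⟨i1, x1, hx1, b1, hb1, _⟩ := hdec i0 a0 ha0
    have := hEle ‖x1 - x1‖ ⟨i1, i0, i1, i0, x1, hx1, x1, hx1, rfl⟩
    simpa using this
  -- key estimate
  have hkey : ∀ t ∈ T, t ≤ c * (e + S) := by
    rintro t ⟨i, j, a, ha, b, hb, rfl⟩
    obtain ⟨i', x, hx, a', ha', hEqa⟩ := hdec i a ha
    obtain ⟨j', y, hy, b', hb', hEqb⟩ := hdec j b hb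
    have hab : a - b = P ((x - y) + (a' - b')) := by
      have h1 : a = P (x + a') := by rw [← hEqa, hPinv]
      have h2 : b = P (y + b') := by rw [← hEqb, hPinv]
      rw [h1, h2, ← map_sub]
      congr 1
      abel
    have hxy : ‖x - y‖ ≤ e := hEle _ ⟨i', i, j', j, x, hx, y, hy, rfl⟩
    have hab' : ‖a' - b'‖ ≤ S := hTle _ ⟨i', j', a', ha', b', hb', rfl⟩
    calc ‖a - b‖ = ‖P ((x - y) + (a' - b'))‖ := by rw [hab]
      _ ≤ c * ‖(x - y) + (a' - b')‖ := P.le_opNorm _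
      _ ≤ c * (‖x - y‖ + ‖a' - b'‖) := by
          exact mul_le_mul_of_nonneg_left (norm_add_le _ _) hc0
      _ ≤ c * (e + S) := by
          exact mul_le_mul_of_nonneg_left (by linarith) hc0
  have hSle : S ≤ c * (e + S) := Real.sSup_le hkey (by positivity)
  have hSR : S ≤ R := by
    rw [hR, le_div_iff₀ (by linarith)]
    nlinarith
  intro i j a ha b hb
  exact le_trans (hTle _ ⟨i, j, a, ha, b, hb, rfl⟩) hSR
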